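/- Suppose P is a convex lattice polygon containing distinct lattice points p and q such that: p and q are not visible to each other; every lattice point of P other than q is visible from p; every lattice point of P other than p is visible from q; and no two of these lines of sight cross. Then the line L through p and q contains exactly 3 lattice points of P, and every other line parallel to L contains at most 1 lattice point of P. -/

import Mathlib

/-- The canonical embedding of `ℤ × ℤ` into `ℝ × ℝ`. -/
noncomputable def latticeCast (p : ℤ × ℤ) : ℝ × ℝ := ((p.1 : ℝ), (p.2 : ℝ))

/-- Two lattice points are visible to one another if the closed segment
joining them contains no lattice point besides the endpoints. -/
def Visible (p q : ℤ × ℤ) : Prop :=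
  ∀ r : ℤ × ℤ, latticeCast r ∈ segment ℝ (latticeCast p) (latticeCast q) → r = p ∨ r = q

/-- Two closed segments cross if they share a point that is not a common endpoint. -/
def SegCross (a b a' b' : ℝ × ℝ) : Prop :=
  ∃ x : ℝ × ℝ, x ∈ segment ℝ a b ∧ x ∈ segment ℝ a' b' ∧
    ¬((x = a ∨ x = b) ∧ (x = a' ∨ x = b'))

/-- The line through `w` with direction `v`. -/
def lineThrough (w v : ℝ × ℝ) : Set (ℝ × ℝ) := {z | ∃ t : ℝ, z = w + t • v}

lemma latticeCast_inj : Function.Injective latticeCast := by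
  intro a b h
  have h1 : (a.1 : ℝ) = b.1 := congrArg Prod.fst h
  have h2 : (a.2 : ℝ) = b.2 := congrArg Prod.snd h
  exact Prod.ext (by exact_mod_cast h1) (by exact_mod_cast h2)

lemma mem_segment_iff' (a b x : ℝ × ℝ) :
    x ∈ segment ℝ a b ↔ ∃ t : ℝ, 0 ≤ t ∧ t ≤ 1 ∧ x = a + t • (b - a) := by
  rw [segment_eq_image' ℝ a b]
  constructor
  · rintro ⟨t, ⟨h0, h1⟩, rfl⟩; exact ⟨t, h0, h1, rfl⟩
  · rintro ⟨t, h0, h1, rfl⟩; exact ⟨t, ⟨h0, h1⟩, rfl⟩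

theorem diploptigon_lines (V : Finset (ℤ × ℤ))
    (P : Set (ℝ × ℝ)) (hP : P = convexHull ℝ (latticeCast '' (V : Set (ℤ × ℤ))))
    (h2dim : ¬ Collinear ℝ (latticeCast '' (V : Set (ℤ × ℤ))))
    (p q : ℤ × ℤ) (hpq : p ≠ q)
    (hpP : latticeCast p ∈ P) (hqP : latticeCast q ∈ P)
    (hnotvis : ¬ Visible p q)
    (hvisp : ∀ r : ℤ × ℤ, latticeCast r ∈ P → r ≠ q → Visible p r)
    (hvisq : ∀ r : ℤ × ℤ, latticeCast r ∈ P → r ≠ p → Visible q r)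
    (hnocross : ∀ r s : ℤ × ℤ, latticeCast r ∈ P → latticeCast s ∈ P → r ≠ q → s ≠ p →
      ¬ SegCross (latticeCast p) (latticeCast r) (latticeCast q) (latticeCast s)) :
    {r : ℤ × ℤ | latticeCast r ∈ P ∧
        latticeCast r ∈ lineThrough (latticeCast p) (latticeCast q - latticeCast p)}.ncard = 3 ∧
    ∀ w : ℝ × ℝ, w ∉ lineThrough (latticeCast p) (latticeCast q - latticeCast p) →
      {r : ℤ × ℤ | latticeCast r ∈ P ∧
        latticeCast r ∈ lineThrough w (latticeCast q - latticeCast p)}.ncard ≤ 1 := by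
  set p' := latticeCast p with hp'
  set q' := latticeCast q with hq'
  set d : ℝ × ℝ := q' - p' with hdd
  have hd : d ≠ 0 := by
    rw [hdd, sub_ne_zero]
    intro h
    exact hpq (latticeCast_inj (show latticeCast p = latticeCast q from h.symm))
  have hq'd : q' = p' + (1 : ℝ) • d := by rw [hdd]; module
  have hconv : Convex ℝ P := hP ▸ convex_convexHull ℝ _
  have hseg : segment ℝ p' q' ⊆ P := hconv.segment_subset hpP hqP
  -- cancel scalars on d
  have hcanc : ∀ s t : ℝ, p' + s • d = p' + t • d → s = t := by
    intro s t h
    have h2 : (s - t) • d = 0 := by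
      have := add_left_cancel h
      rw [sub_smul, this, sub_self]
    rcases smul_eq_zero.mp h2 with h3 | h3
    · linarith [sub_eq_zero.mp (by exact h3)]
    · exact absurd h3 hd
  -- membership of a point in P via segment p q
  have hsegP : ∀ t : ℝ, 0 ≤ t → t ≤ 1 → p' + t • d ∈ P := by
    intro t h0 h1
    apply hseg
    rw [mem_segment_iff']
    exact ⟨t, h0, h1, by rw [hdd]⟩
  -- existence of a lattice point strictly inside [p,q]
  have hex : ∃ (m : ℤ × ℤ) (t : ℝ), 0 < t ∧ t < 1 ∧ latticeCast m = p' + t • d := by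
    unfold Visible at hnotvis
    push_neg at hnotvis
    obtain ⟨m, hmseg, hmp, hmq⟩ := hnotvis
    obtain ⟨t, h0, h1, hmt⟩ := (mem_segment_iff' p' q' _).mp hmseg
    rw [← hdd] at hmt
    refine ⟨m, t, ?_, ?_, hmt⟩
    · rcases h0.lt_or_eq with h | h
      · exact h
      · exfalso; apply hmp; apply latticeCast_inj
        rw [← hp', hmt, ← h]; simp
    · rcases h1.lt_or_eq with h | h
      · exact h
      · exfalso; apply hmq; apply latticeCast_inj
        rw [← hq', hmt, h, ← hq'd]
  -- the reflection lattice point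
  have hrefl : ∀ (r : ℤ × ℤ) (t : ℝ), latticeCast r = p' + t • d →
      latticeCast (p.1 + q.1 - r.1, p.2 + q.2 - r.2) = p' + (1 - t) • d := by
    intro r t h
    have h1 : latticeCast (p.1 + q.1 - r.1, p.2 + q.2 - r.2) = p' + q' - latticeCast r := by
      simp only [latticeCast, hp', hq', Prod.ext_iff, Prod.fst_add, Prod.snd_add, Prod.fst_sub,
        Prod.snd_sub]
      push_cast
      constructor <;> ring
    rw [h1, h, hdd]
    module
  -- any lattice point strictly inside [p,q] sits at parameter 1/2
  have hhalf : ∀ (r : ℤ × ℤ) (t : ℝ), 0 < t → t < 1 → latticeCast r = p' + t • d →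
      t = 1 / 2 := by
    intro r t h0 h1 hr
    by_contra hne
    set r' : ℤ × ℤ := (p.1 + q.1 - r.1, p.2 + q.2 - r.2) with hr'def
    have hr' : latticeCast r' = p' + (1 - t) • d := hrefl r t hr
    have hrP : latticeCast r ∈ P := hr ▸ hsegP t h0.le h1.le
    have hr'P : latticeCast r' ∈ P := hr' ▸ hsegP (1 - t) (by linarith) (by linarith)
    have hrr' : r ≠ r' := by
      intro h
      have := hcanc t (1 - t) (by rw [← hr, h, hr'])
      apply hne; linarith
    rcases lt_or_ge t (1 / 2) with hlt | hge
    · -- r strictly between p and r' ; contradicts Visible p r'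
      have hr'q : r' ≠ q := by
        intro h
        have h2 : p' + (1 : ℝ) • d = p' + (1 - t) • d := by
          rw [← hq'd, hq', ← h, hr']
        have := hcanc 1 (1 - t) h2
        linarith
      have hvis := hvisp r' hr'P hr'q
      have hmem : latticeCast r ∈ segment ℝ p' (latticeCast r') := by
        rw [mem_segment_iff']
        refine ⟨t / (1 - t), div_nonneg h0.le (by linarith), ?_, ?_⟩
        · rw [div_le_one (by linarith)]; linarith
        · rw [hr', hr]
          have h3 : p' + (1 - t) • d - p' = (1 - t) • d := by module
          rw [h3, smul_smul, div_mul_cancel₀]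
          linarith
      rcases hvis r hmem with h | h
      · have h2 : p' + t • d = p' + (0 : ℝ) • d := by
          rw [← hr, h, ← hp']; module
        have := hcanc t 0 h2
        linarith
      · exact hrr' h
    · -- r' strictly between p and r ; contradicts Visible p r
      have hrq : r ≠ q := by
        intro h
        have h2 : p' + (1 : ℝ) • d = p' + t • d := by
          rw [← hq'd, hq', ← h, hr]
        have := hcanc 1 t h2
        linarith
      have hvis := hvisp r hrP hrq
      have hlt' : (1 : ℝ) - t < t := by
        rcases hge.lt_or_eq with h | h
        · linarith
        · exact absurd h.symm hne
      have hmem : latticeCast r' ∈ segment ℝ p' (latticeCast r) := by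
        rw [mem_segment_iff']
        refine ⟨(1 - t) / t, div_nonneg (by linarith) h0.le, ?_, ?_⟩
        · rw [div_le_one h0]; linarith
        · rw [hr', hr]
          have h3 : p' + t • d - p' = t • d := by module
          rw [h3, smul_smul, div_mul_cancel₀]
          linarith
      rcases hvis r' hmem with h | h
      · have h2 : p' + (1 - t) • d = p' + (0 : ℝ) • d := by
          rw [← hr', h, ← hp']; module
        have := hcanc (1 - t) 0 h2
        linarith
      · exact hrr' h.symm
  obtain ⟨m, tm, htm0, htm1, hm⟩ := hex
  have htm : tm = 1 / 2 := hhalf m tm htm0 htm1 hm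
  rw [htm] at hm
  -- p, m, q pairwise distinct
  have hpm : p ≠ m := by
    intro h
    have h2 : p' + (0 : ℝ) • d = p' + (1 / 2 : ℝ) • d := by
      rw [← hm, ← h, ← hp']; module
    have := hcanc 0 (1 / 2) h2
    norm_num at this
  have hmq : m ≠ q := by
    intro h
    have h2 : p' + (1 / 2 : ℝ) • d = p' + (1 : ℝ) • d := by
      rw [← hm, h, ← hq', hq'd]
    have := hcanc (1 / 2) 1 h2
    norm_num at this
  constructor
  · -- the line L contains exactly p, m, q
    rw [Set.ncard_eq_three]
    refine ⟨p, m, q, hpm, hpq, hmq, ?_⟩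
    ext r
    simp only [Set.mem_setOf_eq, Set.mem_insert_iff, Set.mem_singleton_iff, lineThrough]
    constructor
    · rintro ⟨hrP, t, hrt⟩
      rcases lt_trichotomy t 0 with ht | ht | ht
      · -- t < 0 : m blocks q's view of r
        exfalso
        have hrp : r ≠ p := by
          intro h
          have h2 : p' + (0 : ℝ) • d = p' + t • d := by
            rw [← hrt, hp', ← h]; module
          have := hcanc 0 t h2
          linarith
        have hvis := hvisq r hrP hrp
        have hmem : latticeCast m ∈ segment ℝ q' (latticeCast r) := by
          rw [mem_segment_iff']
          refine ⟨1 / (2 * (1 - t)), div_nonneg (by norm_num) (by linarith), ?_, ?_⟩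
          · rw [div_le_one (by linarith)]; nlinarith
          · rw [hrt, hm, hq'd]
            have hne : (1 : ℝ) - t ≠ 0 := by linarith
            have h2 : (1 : ℝ) / (2 * (1 - t)) * (t - 1) = -(1 / 2) := by
              field_simp
              ring
            have h3 : p' + t • d - (p' + (1 : ℝ) • d) = (t - 1) • d := by module
            rw [h3, smul_smul, h2]
            module
        rcases hvis m hmem with h | h
        · exact hmq h
        · have h2 : p' + (1 / 2 : ℝ) • d = p' + t • d := by rw [← hm, h, hrt]
          have := hcanc (1 / 2) t h2
          linarith
      · -- t = 0 : r = p
        left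
        apply latticeCast_inj
        rw [← hp', hrt, ht, zero_smul, add_zero]
      · rcases lt_trichotomy t 1 with ht1 | ht1 | ht1
        · -- 0 < t < 1 : r = m
          right; left
          have h2 := hhalf r t ht ht1 hrt
          apply latticeCast_inj
          rw [hrt, h2, ← hm]
        · -- t = 1 : r = q
          right; right
          apply latticeCast_inj
          rw [← hq', hrt, ht1, ← hq'd]
        · -- t > 1 : m blocks p's view of r
          exfalso
          have hrq : r ≠ q := by
            intro h
            have h2 : p' + (1 : ℝ) • d = p' + t • d := by
              rw [← hq'd, hq', ← h, hrt]
            have := hcanc 1 t h2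
            linarith
          have hvis := hvisp r hrP hrq
          have hmem : latticeCast m ∈ segment ℝ p' (latticeCast r) := by
            rw [mem_segment_iff']
            refine ⟨1 / (2 * t), by positivity, ?_, ?_⟩
            · rw [div_le_one (by linarith)]; linarith
            · rw [hrt, hm]
              have h3 : p' + t • d - p' = t • d := by module
              rw [h3, smul_smul]
              congr 2
              field_simp
          rcases hvis m hmem with h | h
          · exact hpm h.symm
          · have h2 : p' + (1 / 2 : ℝ) • d = p' + t • d := by rw [← hm, h, hrt]
            have := hcanc (1 / 2) t h2
            linarith
    · rintro (rfl | rfl | rfl)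
      · exact ⟨hpP, 0, by simp [hdd, hp']⟩
      · refine ⟨hm ▸ hsegP (1 / 2) (by norm_num) (by norm_num), 1 / 2, ?_⟩
        rw [hm, hdd]
      · exact ⟨hqP, 1, by rw [← hq', hq'd, hdd]⟩
  · -- parallel lines contain at most one lattice point of P
    intro w hw
    have key : ∀ (r s : ℤ × ℤ) (t₁ t₂ : ℝ), latticeCast r ∈ P → latticeCast s ∈ P →
        latticeCast r = w + t₁ • d → latticeCast s = w + t₂ • d → t₁ < t₂ → False := by
      intro r s t₁ t₂ hrP hsP hr hs hlt
      -- r, s are not on the line L, hence differ from p, q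
      have hnotL : ∀ (u : ℤ × ℤ) (t : ℝ), latticeCast u = w + t • d → u ≠ p ∧ u ≠ q := by
        intro u t hu
        constructor
        · intro h
          apply hw
          refine ⟨-t, ?_⟩
          have h2 : p' = w + t • d := by rw [hp', ← h]; exact hu
          rw [h2]; module
        · intro h
          apply hw
          refine ⟨1 - t, ?_⟩
          have h2 : q' = w + t • d := by rw [hq', ← h]; exact hu
          have h4 : w = q' - t • d := by rw [h2]; module
          rw [h4, hq'd]; module
      obtain ⟨hrp, hrq⟩ := hnotL r t₁ hr
      obtain ⟨hsp, hsq⟩ := hnotL s t₂ hs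
      apply hnocross s r hsP hrP hsq hrp
      set μ : ℝ := t₂ - t₁ with hμdef
      have hμ : 0 < μ := by rw [hμdef]; linarith
      set lam : ℝ := 1 / (1 + μ) with hlam
      have hlam0 : 0 < lam := by rw [hlam]; positivity
      have hlam1 : lam < 1 := by
        rw [hlam, div_lt_one (by linarith)]; linarith
      have hsum : lam * μ = 1 - lam := by
        rw [hlam]; field_simp; ring
      have hsr : latticeCast s = latticeCast r + μ • d := by
        rw [hs, hr, hμdef]; module
      refine ⟨p' + lam • (latticeCast s - p'), ?_, ?_, ?_⟩
      · rw [mem_segment_iff']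
        exact ⟨lam, hlam0.le, hlam1.le, rfl⟩
      · rw [mem_segment_iff']
        refine ⟨lam, hlam0.le, hlam1.le, ?_⟩
        rw [hsr, hq'd]
        linear_combination (norm := module) hsum • d
      · -- the crossing point is not an endpoint of [p', s']
        have hsp' : latticeCast s - p' ≠ 0 := by
          intro h
          exact hsp (latticeCast_inj (show latticeCast s = latticeCast p from
            hp' ▸ sub_eq_zero.mp h))
        rintro ⟨h1 | h1, _⟩
        · have h2 : lam • (latticeCast s - p') = 0 := by
            rw [add_eq_left] at h1; exact h1
          rcases smul_eq_zero.mp h2 with h | h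
          · exact absurd h (ne_of_gt hlam0)
          · exact hsp' h
        · have h2 : (1 - lam) • (latticeCast s - p') = 0 := by
            have h3 : p' + lam • (latticeCast s - p') - latticeCast s = 0 := by rw [h1]; simp
            linear_combination (norm := module) (-1 : ℝ) • h3
          rcases smul_eq_zero.mp h2 with h | h
          · have : lam = 1 := by linarith [sub_eq_zero.mp h]
            linarith
          · exact hsp' h
    -- conclude: the set is a subsingleton
    have hss : {r : ℤ × ℤ | latticeCast r ∈ P ∧
        latticeCast r ∈ lineThrough w (q' - p')}.Subsingleton := by
      rintro r ⟨hrP, t₁, hr⟩ s ⟨hsP, t₂, hs⟩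
      rw [← hdd] at hr hs
      rcases lt_trichotomy t₁ t₂ with h | h | h
      · exact absurd (key r s t₁ t₂ hrP hsP hr hs h) (by simp)
      · apply latticeCast_inj; rw [hr, hs, h]
      · exact absurd (key s r t₂ t₁ hsP hrP hs hr h) (by simp)
    rcases hss.eq_empty_or_singleton with h | ⟨a, h⟩
    · rw [h]; simp
    · rw [h]; simp
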